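/- Let A be a unital C*-algebra equipped with a tracial state τ. Then for all unitary elements U and V of A, √2·Re(τ(star U * V)) − Im(τ(U − √2·V)) ≤ 2. -/

import Mathlib

open scoped ComplexOrder
open Complex
section Aux
variable {A : Type*} [NormedRing A] [StarRing A] [CStarRing A] [CompleteSpace A]
    [NormedAlgebra ℂ A] [StarModule ℂ A]
    (τ : A →ₗ[ℂ] ℂ)

lemma herm_aux (hτpos : ∀ a : A, 0 ≤ τ (star a * a)) (hτ1 : τ 1 = 1) (a : A) :
    τ (star a) = starRingEnd ℂ (τ a) := by
  have him : ∀ b : A, (τ (star b * b)).im = 0 := fun b => by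
    have := hτpos b
    rw [Complex.le_def] at this
    exact this.2.symm
  have h1 := him (1 + a)
  have h2 := him (1 + Complex.I • a)
  have e1 : star (1 + a) * (1 + a) = 1 + a + star a + star a * a := by
    simp [star_add, add_mul, mul_add]; abel
  have e2 : star (1 + Complex.I • a) * (1 + Complex.I • a)
      = 1 + Complex.I • a - Complex.I • star a + star a * a := by
    simp [star_add, star_smul, add_mul, mul_add, smul_mul_assoc, mul_smul_comm, smul_smul]
    abel
  rw [e1] at h1
  rw [e2] at h2
  simp [map_add, map_sub, map_smul, hτ1, Complex.add_im, Complex.sub_im, Complex.mul_im,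
    him a] at h1 h2
  apply Complex.ext
  · simp; linarith
  · simp; linarith

lemma cs_aux (hτpos : ∀ a : A, 0 ≤ τ (star a * a)) (hτ1 : τ 1 = 1)
    (herm : ∀ a : A, τ (star a) = starRingEnd ℂ (τ a)) (a : A) :
    ‖τ a‖ ^ 2 ≤ (τ (star a * a)).re := by
  set c := τ a with hc
  have key := hτpos (c • 1 - a)
  have e : star (c • 1 - a) * (c • 1 - a)
      = (starRingEnd ℂ c * c) • 1 - starRingEnd ℂ c • a - c • star a + star a * a := by
    simp [star_sub, star_smul, sub_mul, mul_sub, smul_mul_assoc, mul_smul_comm, smul_smul]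
    module
  rw [e] at key
  simp only [map_add, map_sub, map_smul, hτ1, smul_eq_mul, mul_one, herm a, ← hc] at key
  rw [Complex.le_def] at key
  have hre := key.1
  have habs : (starRingEnd ℂ c * c).re = ‖c‖ ^ 2 := by
    rw [← Complex.normSq_eq_norm_sq]
    simp [Complex.normSq_apply, Complex.mul_re]
  have habs2 : (c * starRingEnd ℂ c).re = ‖c‖ ^ 2 := by
    rw [← Complex.normSq_eq_norm_sq]
    simp [Complex.normSq_apply, Complex.mul_re]
  simp only [Complex.add_re, Complex.sub_re, habs, habs2, Complex.zero_re] at hre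
  linarith
end Aux

theorem sqrt_two_re_sub_im_le_two
    {A : Type*} [NormedRing A] [StarRing A] [CStarRing A] [CompleteSpace A]
    [NormedAlgebra ℂ A] [StarModule ℂ A]
    (τ : A →ₗ[ℂ] ℂ)
    (hτ1 : τ 1 = 1)
    (hτtr : ∀ a b : A, τ (a * b) = τ (b * a))
    (hτpos : ∀ a : A, 0 ≤ τ (star a * a))
    (U V : A) (hU : U ∈ unitary A) (hV : V ∈ unitary A) :
    Real.sqrt 2 * (τ (star U * V)).re
      - (τ (U - (Real.sqrt 2 : ℂ) • V)).im ≤ 2 := by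
  have herm := herm_aux τ hτpos hτ1
  set s : ℂ := (Real.sqrt 2 : ℂ) with hs
  set a := U - s • V with ha
  set z := τ (star U * V) with hz
  -- expand star a * a
  have e : star a * a
      = star U * U - s • (star U * V) - s • (star V * U) + (s * s) • (star V * V) := by
    have hconj : starRingEnd ℂ s = s := by rw [hs, Complex.conj_ofReal]
    rw [ha]
    simp [star_sub, star_smul, sub_mul, mul_sub, smul_mul_assoc, mul_smul_comm, smul_smul,
      hconj]
    module
  have hw : τ (star V * U) = starRingEnd ℂ z := by
    have := herm (star U * V)
    rwa [star_mul, star_star] at this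
  have hs2 : s * s = 2 := by
    rw [hs, ← Complex.ofReal_mul, Real.mul_self_sqrt (by norm_num)]
    norm_num
  have eτ : τ (star a * a) = 3 - s * z - s * starRingEnd ℂ z := by
    rw [e]
    simp only [map_add, map_sub, map_smul, smul_eq_mul, hU.1, hV.1, hτ1, hw, ← hz, hs2]
    ring
  -- t := re of it
  have ht0 : (0:ℝ) ≤ (τ (star a * a)).re := by
    have := hτpos a
    rw [Complex.le_def] at this
    simpa using this.1
  have htval : (τ (star a * a)).re = 3 - 2 * (Real.sqrt 2 * z.re) := by
    rw [eτ]
    simp [Complex.sub_re, Complex.mul_re, hs, Complex.ofReal_re, Complex.ofReal_im]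
    ring
  have hcs := cs_aux τ hτpos hτ1 herm a
  have him2 : (τ a).im ^ 2 ≤ (τ (star a * a)).re := by
    refine le_trans ?_ hcs
    rw [← Complex.normSq_eq_norm_sq, Complex.normSq_apply]
    nlinarith [sq_nonneg (τ a).re]
  set t := (τ (star a * a)).re with hts
  have hsq := Real.sq_sqrt ht0
  have hsqnn := Real.sqrt_nonneg t
  have him3 : -(τ a).im ≤ Real.sqrt t := by nlinarith [him2, hsq, hsqnn]
  have hfin : Real.sqrt 2 * z.re - (τ a).im ≤ 2 := by
    nlinarith [sq_nonneg (Real.sqrt t - 1), hsq, htval, him3]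
  simpa [hz, ha, hs] using hfin
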